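/- Let x, y ∈ X with x ≠ y. Then Σ_B ( k(diam B) − k(diam B⁺) ) + k(diam X) = k(d(x,y)), where the sum ranges over all balls B of X with B ⊊ X that contain both x and y (these are exactly the balls B with B(x, d(x,y)) ⊆ B ⊊ X, and they form a chain under inclusion). -/
import Mathlib


open scoped Classical
open Finset

/-- Closed ball of radius `r` around `x`, as a finset. -/
noncomputable def uball {X : Type*} [Fintype X] (d : X → X → ℝ) (x : X) (r : ℝ) : Finset X :=
  Finset.univ.filter fun y => d x y ≤ r

/-- A ball of the ultrametric space: a closed ball of nonnegative radius. -/
def IsBall {X : Type*} [Fintype X] (d : X → X → ℝ) (B : Finset X) : Prop :=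
  ∃ x r, 0 ≤ r ∧ B = uball d x r

/-- Diameter of a finite set: maximum of `d` over `B × B` (`0` if `B` is empty). -/
noncomputable def fdiam {X : Type*} [Fintype X] (d : X → X → ℝ) (B : Finset X) : ℝ :=
  if h : (B ×ˢ B).Nonempty then (B ×ˢ B).sup' h fun p => d p.1 p.2 else 0

/-- Mass of a set: `m(B) = Σ_{x ∈ B} m(x)`. -/
noncomputable def mass {X : Type*} [Fintype X] (m : X → ℝ) (B : Finset X) : ℝ :=
  ∑ x ∈ B, m x

/-- The eigenvalue attached to a ball `B`, computed from a base point `x₀ ∈ B`: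
`λ(B) = −(Σ_{y ∉ B} k(d(x₀,y))·m(y) + k(diam B)·m(B))`. -/
noncomputable def lamB {X : Type*} [Fintype X] [DecidableEq X]
    (d : X → X → ℝ) (k : ℝ → ℝ) (m : X → ℝ) (B : Finset X) (x₀ : X) : ℝ :=
  -((∑ y ∈ Bᶜ, k (d x₀ y) * m y) + k (fdiam d B) * mass m B)

/-- The parent radius of a ball `B ⊊ X` seen from `x ∈ B`: `r⁺ = min{d(x,y) : y ∉ B}`. -/
noncomputable def parentR {X : Type*} [Fintype X] [DecidableEq X]
    (d : X → X → ℝ) (B : Finset X) (x : X) : ℝ :=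
  if h : (Bᶜ : Finset X).Nonempty then Bᶜ.inf' h fun y => d x y else 0

/-- The parent ball `B⁺ = B(x, r⁺)` of `B ⊊ X`, computed from a base point `x ∈ B`. -/
noncomputable def parentB {X : Type*} [Fintype X] [DecidableEq X]
    (d : X → X → ℝ) (B : Finset X) (x : X) : Finset X :=
  uball d x (parentR d B x)

/-- The ultrametric Laplacian matrix:
`L x y = k(d(x,y))·m(y)` off the diagonal and `L x x = −Σ_{z ≠ x} k(d(x,z))·m(z)`. -/
noncomputable def ultraLap {X : Type*} [Fintype X] [DecidableEq X]
    (d : X → X → ℝ) (k : ℝ → ℝ) (m : X → ℝ) : Matrix X X ℝ :=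
  fun x y => if y = x then -(∑ z ∈ ({x}ᶜ : Finset X), k (d x z) * m z) else k (d x y) * m y

/-- The smallest ball containing `x` and `y` and having at least two elements:
`B(x, d(x,y))` for `x ≠ y`, and `B(x, min_{z ≠ x} d(x,z))` for `x = y`. -/
noncomputable def sball {X : Type*} [Fintype X] [DecidableEq X]
    (d : X → X → ℝ) (x y : X) : Finset X :=
  if x = y then
    (if h : (({x}ᶜ : Finset X)).Nonempty then
      uball d x ((({x}ᶜ : Finset X)).inf' h fun z => d x z)
     else uball d x 0)
  else uball d x (d x y)

set_option linter.unusedSectionVars false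
set_option linter.unusedVariables false

section aux
variable {X : Type*} [Fintype X] [DecidableEq X] {d : X → X → ℝ}

lemma mem_uball {x z : X} {r : ℝ} : z ∈ uball d x r ↔ d x z ≤ r := by
  simp [uball]

lemma dist_le_fdiam {B : Finset X} {z w : X} (hz : z ∈ B) (hw : w ∈ B) :
    d z w ≤ fdiam d B := by
  have hne : (B ×ˢ B).Nonempty := ⟨(z, w), mem_product.2 ⟨hz, hw⟩⟩
  rw [fdiam, dif_pos hne]
  have hm : (z, w) ∈ B ×ˢ B := mem_product.2 ⟨hz, hw⟩
  exact le_sup' (fun p : X × X => d p.1 p.2) hm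

lemma fdiam_le (hsymm : ∀ a b, d a b = d b a)
    (hultra : ∀ a b c, d a c ≤ max (d a b) (d b c))
    {B : Finset X} {x : X} {s : ℝ} (hx : x ∈ B) (hs : 0 ≤ s)
    (h : ∀ z ∈ B, d x z ≤ s) : fdiam d B ≤ s := by
  rw [fdiam]
  split
  · next hne =>
    apply sup'_le
    rintro ⟨a, b⟩ hab
    rw [mem_product] at hab
    calc d a b ≤ max (d a x) (d x b) := hultra a x b
    _ ≤ s := max_le (by rw [hsymm]; exact h a hab.1) (h b hab.2)
  · exact hs

lemma exists_fdiam_witness (hsymm : ∀ a b, d a b = d b a)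
    (hultra : ∀ a b c, d a c ≤ max (d a b) (d b c))
    {B : Finset X} {x : X} (hx : x ∈ B) :
    ∃ w ∈ B, d x w = fdiam d B := by
  have hne : (B ×ˢ B).Nonempty := ⟨(x, x), mem_product.2 ⟨hx, hx⟩⟩
  obtain ⟨p, hp, hpe⟩ := Finset.exists_mem_eq_sup' hne (fun p : X × X => d p.1 p.2)
  rw [mem_product] at hp
  have hfd : fdiam d B = d p.1 p.2 := by rw [fdiam, dif_pos hne]; exact hpe
  have h1 : d x p.1 ≤ fdiam d B := dist_le_fdiam hx hp.1
  have h2 : d x p.2 ≤ fdiam d B := dist_le_fdiam hx hp.2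
  have hms := hultra p.1 x p.2
  rw [hsymm p.1 x] at hms
  rcases le_max_iff.1 (le_of_le_of_eq (le_of_eq hfd) rfl |>.trans hms) with h | h
  · exact ⟨p.1, hp.1, le_antisymm h1 h⟩
  · exact ⟨p.2, hp.2, le_antisymm h2 h⟩

lemma ball_eq_uball (hsymm : ∀ a b, d a b = d b a)
    (hultra : ∀ a b c, d a c ≤ max (d a b) (d b c))
    {B : Finset X} (hB : IsBall d B) {x : X} (hx : x ∈ B) :
    B = uball d x (fdiam d B) := by
  obtain ⟨c, r, hr, rfl⟩ := hB
  have hxc : d c x ≤ r := mem_uball.1 hx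
  have hbound : ∀ z ∈ uball d c r, d x z ≤ r := fun z hz =>
    le_trans (hultra x c z) (max_le (by rw [hsymm]; exact hxc) (mem_uball.1 hz))
  have hfd : fdiam d (uball d c r) ≤ r := fdiam_le hsymm hultra hx hr hbound
  ext z
  rw [mem_uball, mem_uball]
  constructor
  · intro hz; exact dist_le_fdiam hx (mem_uball.2 hz)
  · intro hz; exact le_trans (hultra c x z) (max_le hxc (le_trans hz hfd))

end aux

/-- For `x ≠ y`, summing the telescoping differences
`k(diam B) − k(diam B⁺)` over all balls `B ⊊ X` containing both `x` and `y`
and adding `k(diam X)` recovers `k(d(x,y))`. -/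
theorem stmt5 {X : Type*} [Fintype X] [DecidableEq X]
    (hX : 1 < Fintype.card X)
    (d : X → X → ℝ)
    (hd0 : ∀ x y, d x y = 0 ↔ x = y)
    (hsymm : ∀ x y, d x y = d y x)
    (hultra : ∀ x y z, d x z ≤ max (d x y) (d y z))
    (k : ℝ → ℝ)
    (x y : X) (hxy : x ≠ y) :
    (∑ B ∈ Finset.univ.filter
        (fun B : Finset X => IsBall d B ∧ x ∈ B ∧ y ∈ B ∧ B ≠ Finset.univ),
      (k (fdiam d B) - k (fdiam d (parentB d B x)))) + k (fdiam d Finset.univ)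
      = k (d x y) := by
  classical
  have dxx : ∀ a : X, d a a = 0 := fun a => (hd0 a a).2 rfl
  have hnn : ∀ a b : X, 0 ≤ d a b := by
    intro a b
    have h := hultra a b a
    rw [dxx a, hsymm b a, max_self] at h
    exact h
  have hdxy : 0 < d x y :=
    lt_of_le_of_ne (hnn x y) fun h => hxy ((hd0 x y).1 h.symm)
  set S : Finset (Finset X) := Finset.univ.filter
      (fun B : Finset X => IsBall d B ∧ x ∈ B ∧ y ∈ B ∧ B ≠ Finset.univ) with hSdef
  set B₀ : Finset X := uball d x (d x y) with hB₀def
  have hxB₀ : x ∈ B₀ := mem_uball.2 (by rw [dxx]; exact hdxy.le)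
  have hyB₀ : y ∈ B₀ := mem_uball.2 le_rfl
  have hB₀ball : IsBall d B₀ := ⟨x, d x y, hdxy.le, rfl⟩
  have hfdB₀ : fdiam d B₀ = d x y :=
    le_antisymm (fdiam_le hsymm hultra hxB₀ hdxy.le fun z hz => mem_uball.1 hz)
      (dist_le_fdiam hxB₀ hyB₀)
  have hmemS : ∀ B ∈ S, IsBall d B ∧ x ∈ B ∧ y ∈ B ∧ B ≠ Finset.univ := by
    intro B hB
    simpa [hSdef] using hB
  -- parent facts for members of S
  have hPfacts : ∀ B ∈ S,
      fdiam d B < parentR d B x ∧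
      fdiam d (parentB d B x) = parentR d B x ∧
      B = Finset.univ.filter (fun z => d x z < parentR d B x) := by
    intro B hB
    obtain ⟨hball, hxB, hyB, hne⟩ := hmemS B hB
    have hc : (Bᶜ : Finset X).Nonempty := by
      obtain ⟨a, ha⟩ : ∃ a, a ∉ B := by
        by_contra h'; push_neg at h'
        exact hne (Finset.eq_univ_iff_forall.2 h')
      exact ⟨a, Finset.mem_compl.2 ha⟩
    have hPR : parentR d B x = Bᶜ.inf' hc fun z => d x z := by
      rw [parentR, dif_pos hc]
    obtain ⟨w, hw, hwe⟩ := Finset.exists_mem_eq_inf' hc (fun z => d x z)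
    have hwB : w ∉ B := Finset.mem_compl.1 hw
    have hwPR : d x w = parentR d B x := by rw [hPR, hwe]
    have hlb : ∀ z, z ∉ B → parentR d B x ≤ d x z := fun z hz => by
      rw [hPR]; exact Finset.inf'_le _ (Finset.mem_compl.2 hz)
    have hBe := ball_eq_uball hsymm hultra hball hxB
    have hlt : fdiam d B < parentR d B x := by
      rw [← hwPR]
      by_contra h
      push_neg at h
      exact hwB (hBe ▸ mem_uball.2 h)
    have hfd0 : 0 ≤ fdiam d B := by
      rw [← dxx x]; exact dist_le_fdiam hxB hxB
    have hxP : x ∈ parentB d B x := mem_uball.2 (by rw [dxx]; linarith)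
    have hwP : w ∈ parentB d B x := mem_uball.2 (le_of_eq hwPR)
    have hPfd : fdiam d (parentB d B x) = parentR d B x := by
      refine le_antisymm ?_ ?_
      · exact fdiam_le hsymm hultra hxP (by linarith) fun z hz => mem_uball.1 hz
      · rw [← hwPR]; exact dist_le_fdiam hxP hwP
    refine ⟨hlt, hPfd, ?_⟩
    ext z
    simp only [Finset.mem_filter, Finset.mem_univ, true_and]
    constructor
    · intro hz
      have hzd : d x z ≤ fdiam d B := by
        rw [hBe] at hz; exact mem_uball.1 hz
      linarith
    · intro hz
      by_contra hzB
      exact absurd hz (not_lt.2 (hlb z hzB))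
  have huniv_not_S : Finset.univ ∉ S := fun h => (hmemS _ h).2.2.2 rfl
  have hX_ne : (Finset.univ : Finset X).Nonempty := ⟨x, Finset.mem_univ x⟩
  have huniv_ball : IsBall d Finset.univ := by
    refine ⟨x, Finset.univ.sup' hX_ne (fun z => d x z), ?_, ?_⟩
    · rw [← dxx x]; exact Finset.le_sup' (fun z => d x z) (Finset.mem_univ x)
    · ext z
      simp only [Finset.mem_univ, true_iff]
      exact mem_uball.2 (Finset.le_sup' (fun z => d x z) (Finset.mem_univ z))
  have hB₀mem : B₀ ∈ insert Finset.univ S := by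
    by_cases h : B₀ = Finset.univ
    · rw [h]; exact Finset.mem_insert_self _ _
    · refine Finset.mem_insert_of_mem ?_
      simp only [hSdef, Finset.mem_filter, Finset.mem_univ, true_and]
      exact ⟨hB₀ball, hxB₀, hyB₀, h⟩
  have hCfacts : ∀ C ∈ (insert Finset.univ S).erase B₀,
      IsBall d C ∧ x ∈ C ∧ y ∈ C ∧ d x y < fdiam d C := by
    intro C hC
    have hCne : C ≠ B₀ := Finset.ne_of_mem_erase hC
    have hC' := Finset.mem_of_mem_erase hC
    have hball : IsBall d C ∧ x ∈ C ∧ y ∈ C := by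
      rcases Finset.mem_insert.1 hC' with h | h
      · subst h; exact ⟨huniv_ball, Finset.mem_univ x, Finset.mem_univ y⟩
      · obtain ⟨a, b, c, _⟩ := hmemS C h; exact ⟨a, b, c⟩
    obtain ⟨hball, hxC, hyC⟩ := hball
    have hle : d x y ≤ fdiam d C := dist_le_fdiam hxC hyC
    refine ⟨hball, hxC, hyC, lt_of_le_of_ne hle fun h => ?_⟩
    apply hCne
    rw [ball_eq_uball hsymm hultra hball hxC, ← h, hB₀def]
  -- the inverse map to `parentB · x`
  set j : Finset X → Finset X :=
    fun C => Finset.univ.filter (fun z => d x z < fdiam d C) with hj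
  have key : ∑ B ∈ S, k (fdiam d (parentB d B x))
      = ∑ C ∈ (insert Finset.univ S).erase B₀, k (fdiam d C) := by
    refine Finset.sum_nbij' (fun B => parentB d B x) j ?_ ?_ ?_ ?_ ?_
    · -- maps S into the erased set
      intro B hB
      show parentB d B x ∈ (insert Finset.univ S).erase B₀
      obtain ⟨hball, hxB, hyB, hne⟩ := hmemS B hB
      obtain ⟨hlt, hPfd, hchar⟩ := hPfacts B hB
      have hfd0 : 0 ≤ fdiam d B := by
        rw [← dxx x]; exact dist_le_fdiam hxB hxB
      have hmemlt : ∀ z ∈ B, d x z < parentR d B x := by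
        intro z hz
        rw [hchar] at hz
        simpa using hz
      have hBsub : B ⊆ parentB d B x := fun z hz =>
        mem_uball.2 (hmemlt z hz).le
      have hxP : x ∈ parentB d B x := mem_uball.2 (by rw [dxx]; linarith)
      have hyP : y ∈ parentB d B x := hBsub hyB
      refine Finset.mem_erase.2 ⟨?_, ?_⟩
      · intro hEq
        have h1 : parentR d B x = d x y := by
          rw [← hPfd, hEq, hfdB₀]
        have h2 := hmemlt y hyB
        linarith
      · by_cases hPu : parentB d B x = Finset.univ
        · rw [hPu]; exact Finset.mem_insert_self _ _
        · refine Finset.mem_insert_of_mem ?_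
          simp only [hSdef, Finset.mem_filter, Finset.mem_univ, true_and]
          exact ⟨⟨x, parentR d B x, by linarith, rfl⟩, hxP, hyP, hPu⟩
    · -- j maps the erased set into S
      intro C hC
      show j C ∈ S
      obtain ⟨hball, hxC, hyC, hlt⟩ := hCfacts C hC
      have hxj : x ∈ j C := by
        simp only [hj, Finset.mem_filter, Finset.mem_univ, true_and, dxx]
        linarith
      have hyj : y ∈ j C := by
        simp only [hj, Finset.mem_filter, Finset.mem_univ, true_and]
        exact hlt
      obtain ⟨w, hwC, hwfd⟩ := exists_fdiam_witness hsymm hultra hxC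
      have hwj : w ∉ j C := by
        simp only [hj, Finset.mem_filter, Finset.mem_univ, true_and, not_lt, hwfd]
        exact le_refl _
      have hjne : j C ≠ Finset.univ := fun h => hwj (h ▸ Finset.mem_univ w)
      have hjnonempty : (j C).Nonempty := ⟨x, hxj⟩
      obtain ⟨z₀, hz₀, hz₀e⟩ := Finset.exists_mem_eq_sup' hjnonempty (fun z => d x z)
      have hrlt : (j C).sup' hjnonempty (fun z => d x z) < fdiam d C := by
        rw [hz₀e]
        have := hz₀
        simp only [hj, Finset.mem_filter, Finset.mem_univ, true_and] at this
        exact this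
      have hjball : j C = uball d x ((j C).sup' hjnonempty (fun z => d x z)) := by
        ext z
        rw [mem_uball]
        constructor
        · intro hz; exact Finset.le_sup' (fun z => d x z) hz
        · intro hz
          simp only [hj, Finset.mem_filter, Finset.mem_univ, true_and]
          exact lt_of_le_of_lt hz hrlt
      have hr0 : 0 ≤ (j C).sup' hjnonempty (fun z => d x z) := by
        rw [← dxx x]; exact Finset.le_sup' (fun z => d x z) hxj
      simp only [hSdef, Finset.mem_filter, Finset.mem_univ, true_and]
      exact ⟨⟨x, _, hr0, hjball⟩, hxj, hyj, hjne⟩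
    · -- left inverse
      intro B hB
      show j (parentB d B x) = B
      obtain ⟨hlt, hPfd, hchar⟩ := hPfacts B hB
      simp only [hj]
      simp only [hPfd]
      exact hchar.symm
    · -- right inverse
      intro C hC
      show parentB d (j C) x = C
      obtain ⟨hball, hxC, hyC, hlt⟩ := hCfacts C hC
      have hCe := ball_eq_uball hsymm hultra hball hxC
      obtain ⟨w, hwC, hwfd⟩ := exists_fdiam_witness hsymm hultra hxC
      have hwj : w ∉ j C := by
        simp only [hj, Finset.mem_filter, Finset.mem_univ, true_and, not_lt, hwfd]
        exact le_refl _
      have hcj : ((j C)ᶜ : Finset X).Nonempty := ⟨w, Finset.mem_compl.2 hwj⟩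
      have hPRj : parentR d (j C) x = fdiam d C := by
        rw [parentR, dif_pos hcj]
        refine le_antisymm ?_ ?_
        · rw [← hwfd]; exact Finset.inf'_le _ (Finset.mem_compl.2 hwj)
        · refine Finset.le_inf' _ _ fun z hz => ?_
          have hzj := Finset.mem_compl.1 hz
          simp only [hj, Finset.mem_filter, Finset.mem_univ, true_and, not_lt] at hzj
          exact hzj
      rw [parentB, hPRj]
      exact hCe.symm
    · intro B hB; rfl
  rw [Finset.sum_sub_distrib, key]
  have h1 : ∑ C ∈ insert Finset.univ S, k (fdiam d C)
      = k (fdiam d Finset.univ) + ∑ B ∈ S, k (fdiam d B) :=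
    Finset.sum_insert huniv_not_S
  have h2 : k (fdiam d B₀) + ∑ C ∈ (insert Finset.univ S).erase B₀, k (fdiam d C)
      = ∑ C ∈ insert Finset.univ S, k (fdiam d C) :=
    Finset.add_sum_erase _ (fun C => k (fdiam d C)) hB₀mem
  rw [hfdB₀] at h2
  linarith
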